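/- For every data compressor ψ and every total recursive function γ : ℕ → ℕ that is monotone nondecreasing and tends to infinity, there exists a binary string x such that C(x) ≤ γ(|x|) and |ψ(x)| ≥ |x|. -/

import Mathlib

noncomputable section

/-- Kolmogorov complexity of a binary string `x` with respect to a machine (partial
function) `ζ`: the minimal length of a program `p` with `ζ(p) = x` (`min ∅ = ∞`). -/
def Cplx (ζ : List Bool →. List Bool) (x : List Bool) : ℕ∞ :=
  sInf {n : ℕ∞ | ∃ p : List Bool, ζ p = Part.some x ∧ (p.length : ℕ∞) = n}

/-- `ζ₀` is an optimal machine: it is partial recursive and for every partial recursive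
machine `ζ'` there is a constant `c` with `C_{ζ₀}(x) ≤ C_{ζ'}(x) + c` for all `x`. -/
def OptimalMachine (ζ₀ : List Bool →. List Bool) : Prop :=
  Partrec ζ₀ ∧ ∀ ζ' : List Bool →. List Bool, Partrec ζ' →
    ∃ c : ℕ, ∀ x : List Bool, Cplx ζ₀ x ≤ Cplx ζ' x + (c : ℕ∞)

/-- The binary string identified with the natural number `n` via the length-lexicographic
ordering (`0 ↦ ε`, `1 ↦ 0`, `2 ↦ 1`, `3 ↦ 00`, …): the binary digits of `n+1`
(most significant first) with the leading `1` removed. -/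
def natToStr (n : ℕ) : List Bool := ((n + 1).bits.reverse).tail

/-- The natural number identified with the binary string `x` via the length-lexicographic
ordering (the inverse of `natToStr`). -/
def strToNat (x : List Bool) : ℕ := (x.foldl (fun a b => 2 * a + cond b 1 0) 1) - 1

/-- Finset of binary strings of length at most `m`. -/
def listsLe : ℕ → Finset (List Bool)
  | 0 => {[]}
  | m + 1 => insert [] (((listsLe m).image (List.cons false)) ∪ ((listsLe m).image (List.cons true)))

lemma mem_listsLe (m : ℕ) (x : List Bool) : x ∈ listsLe m ↔ x.length ≤ m := by
  induction m generalizing x with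
  | zero => cases x <;> simp [listsLe]
  | succ m ih =>
    cases x with
    | nil => simp [listsLe]
    | cons b t =>
      cases b <;> simp [listsLe, ih, Nat.succ_le_succ_iff]

lemma card_listsLe (m : ℕ) : (listsLe m).card = 2 ^ (m + 1) - 1 := by
  induction m with
  | zero => simp [listsLe]
  | succ m ih =>
    have hd : Disjoint ((listsLe m).image (List.cons false)) ((listsLe m).image (List.cons true)) := by
      simp only [Finset.disjoint_left, Finset.mem_image]
      rintro a ⟨t, _, rfl⟩ ⟨s, _, h⟩
      simp at h
    have hnil : ([] : List Bool) ∉ ((listsLe m).image (List.cons false)) ∪ ((listsLe m).image (List.cons true)) := by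
      simp
    rw [listsLe, Finset.card_insert_of_notMem hnil, Finset.card_union_of_disjoint hd,
      Finset.card_image_of_injective _ (fun a b h => by injection h),
      Finset.card_image_of_injective _ (fun a b h => by injection h), ih]
    have h1 : 1 ≤ 2 ^ (m + 1) := Nat.one_le_two_pow
    omega

lemma unbounded_incompressible (ψ : List Bool → List Bool) (hψi : Function.Injective ψ) (M : ℕ) :
    ∃ x : List Bool, M ≤ x.length ∧ x.length ≤ (ψ x).length := by
  by_contra h
  push_neg at h
  have hsub : (listsLe (M + 1)).image ψ ⊆ listsLe M ∪ (listsLe M).image ψ := by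
    intro y hy
    simp only [Finset.mem_image] at hy
    obtain ⟨x, hx, rfl⟩ := hy
    rw [mem_listsLe] at hx
    rcases le_or_gt x.length M with h1 | h1
    · exact Finset.mem_union_right _ (Finset.mem_image_of_mem ψ ((mem_listsLe M x).2 h1))
    · have := h x (by omega)
      exact Finset.mem_union_left _ ((mem_listsLe M _).2 (by omega))
  have hcard := Finset.card_le_card hsub
  rw [Finset.card_image_of_injective _ hψi] at hcard
  have h2 := Finset.card_union_le (listsLe M) ((listsLe M).image ψ)
  have h3 := Finset.card_image_le (f := ψ) (s := listsLe M)
  rw [card_listsLe] at hcard h2 h3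
  have h1 : 2 ≤ 2 ^ (M + 1) := Nat.one_lt_two_pow_iff.2 (by omega)
  have : (2:ℕ) ^ (M + 2) = 2 * 2 ^ (M + 1) := by ring
  omega


/-- For every data compressor `ψ` (a total recursive injection on binary strings) and every
total recursive `γ : ℕ → ℕ` that is monotone and tends to infinity, there is a binary string
`x` with `C(x) ≤ γ(|x|)` which `ψ` does not compress (`|ψ(x)| ≥ |x|`). -/
theorem compressor_misses_simple_string (ζ₀ : List Bool →. List Bool)
    (hζ₀ : OptimalMachine ζ₀)
    (ψ : List Bool → List Bool) (hψc : Computable ψ) (hψi : Function.Injective ψ)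
    (γ : ℕ → ℕ) (hγc : Computable γ) (hγm : Monotone γ)
    (hγtop : Filter.Tendsto γ Filter.atTop Filter.atTop) :
    ∃ x : List Bool, Cplx ζ₀ x ≤ (γ x.length : ℕ∞) ∧ x.length ≤ (ψ x).length := by
  obtain ⟨hζ₀p, hopt⟩ := hζ₀
  -- key existence: for every n there is an incompressible x with γ(|x|) ≥ n
  have key : ∀ n : ℕ, ∃ x : List Bool, x.length ≤ (ψ x).length ∧ n ≤ γ x.length := by
    intro n
    obtain ⟨M, hM⟩ := (Filter.tendsto_atTop_atTop.1 hγtop) n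
    obtain ⟨x, hx1, hx2⟩ := unbounded_incompressible ψ hψi M
    exact ⟨x, hx2, hM _ hx1⟩
  -- the machine
  set e : ℕ → List Bool := fun k => (Encodable.decode (α := List Bool) k).getD [] with he
  set b : List Bool → ℕ → Bool :=
    fun p k => decide ((e k).length ≤ (ψ (e k)).length) && decide (2 * p.length ≤ γ (e k).length)
    with hb
  set ζ' : List Bool →. List Bool := fun p => (Nat.rfind (b p : ℕ →. Bool)).map e with hζ'
  have hE : Computable e := Computable.option_getD Computable.decode (Computable.const [])
  have hlen1 : Computable fun k : ℕ => (e k).length := Computable.list_length.comp hE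
  have hlen2 : Computable fun k : ℕ => (ψ (e k)).length :=
    Computable.list_length.comp (hψc.comp hE)
  have hγl : Computable fun k : ℕ => γ (e k).length := hγc.comp hlen1
  have hle : Computable₂ fun a b : ℕ => decide (a ≤ b) := Primrec.nat_le.decide.to_comp
  have hb1 : Computable₂ fun (_ : List Bool) (k : ℕ) => decide ((e k).length ≤ (ψ (e k)).length) :=
    (hle.comp hlen1 hlen2).comp Computable.snd
  have hb2 : Computable₂ fun (p : List Bool) (k : ℕ) => decide (2 * p.length ≤ γ (e k).length) :=
    hle.comp
      ((Primrec.nat_mul.comp (Primrec.const 2) Primrec.list_length).to_comp.comp Computable.fst)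
      (hγl.comp Computable.snd)
  have hbc : Computable₂ b := (Primrec.dom_bool₂ (· && ·)).to_comp.comp₂ hb1 hb2
  have hζ'p : Partrec ζ' := (Partrec.rfind hbc.partrec₂).map (hE.comp Computable.snd).to₂
  obtain ⟨c, hc⟩ := hopt ζ' hζ'p
  -- choose the program
  set p : List Bool := List.replicate c true with hp
  obtain ⟨x₀, hx₀1, hx₀2⟩ := key (2 * c)
  have hbp : b p (Encodable.encode x₀) = true := by
    simp only [hb, he, Encodable.encodek, Option.getD_some, hp, List.length_replicate,
      Bool.and_eq_true, decide_eq_true_eq]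
    exact ⟨hx₀1, hx₀2⟩
  obtain ⟨k₀, hk₀, -⟩ := Nat.rfind_min' hbp
  set x : List Bool := e k₀ with hx
  have hmemζ : ζ' p = Part.some x := by
    rw [Part.eq_some_iff]
    exact Part.mem_map e hk₀
  have hbk : b p k₀ = true := by
    have := Nat.rfind_spec hk₀
    simpa using this
  have hxprop : x.length ≤ (ψ x).length ∧ 2 * c ≤ γ x.length := by
    simp only [hb, hp, List.length_replicate, Bool.and_eq_true, decide_eq_true_eq] at hbk
    exact hbk
  refine ⟨x, ?_, hxprop.1⟩
  have h1 : Cplx ζ' x ≤ (c : ℕ∞) := by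
    apply sInf_le
    exact ⟨p, hmemζ, by simp [hp]⟩
  calc Cplx ζ₀ x ≤ Cplx ζ' x + (c : ℕ∞) := hc x
    _ ≤ (c : ℕ∞) + (c : ℕ∞) := add_le_add_left h1 _
    _ = ((2 * c : ℕ) : ℕ∞) := by push_cast; ring
    _ ≤ (γ x.length : ℕ∞) := by exact_mod_cast hxprop.2
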